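/- Let χ be the substitution on {a,b} with χ(a) = aab and χ(b) = abb, and let X_χ be its substitution subshift. Then there exists a continuous surjection F : X_χ → X_χ satisfying F ∘ σ² = σ ∘ F; that is, (X_χ, σ) is a topological factor of (X_χ, σ²). -/

import Mathlib

open Set Topology Classical

noncomputable section

/-- The left shift `σ` on bi-infinite sequences: `(σ x) n = x (n+1)`. -/
def shiftMap {A : Type} (x : ℤ → A) : ℤ → A := fun n => x (n + 1)

/-- The shift by an integer amount: `shiftZ n x = σ^n x`. -/
def shiftZ {A : Type} (n : ℤ) (x : ℤ → A) : ℤ → A := fun m => x (m + n)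

/-- A bi-infinite sequence is Toeplitz if every coordinate is periodically repeated. -/
def IsToeplitz {A : Type} (x : ℤ → A) : Prop :=
  ∀ i : ℤ, ∃ p : ℕ, 0 < p ∧ ∀ k : ℤ, x (i + k * (p : ℤ)) = x i

/-- The closure of the full shift orbit of `x`. -/
def orbitClosure {A : Type} [TopologicalSpace A] (x : ℤ → A) : Set (ℤ → A) :=
  closure {y | ∃ n : ℤ, shiftZ n x = y}

/-- The finite word `x_i x_{i+1} ⋯ x_{i+n-1}`. -/
def seqWord {A : Type} (x : ℤ → A) (i : ℤ) (n : ℕ) : List A :=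
  List.ofFn fun m : Fin n => x (i + (m : ℕ))

/-- Iterates `θ^k` of a substitution, applied to a letter. -/
def substPow {A : Type} (θ : A → List A) : ℕ → A → List A
  | 0, a => [a]
  | k + 1, a => (θ a).flatMap (substPow θ k)

/-- The substitution subshift of `θ`: all sequences whose finite subwords occur in
some `θ^k(a)`. -/
def substShift {A : Type} (θ : A → List A) : Set (ℤ → A) :=
  {x | ∀ i : ℤ, ∀ n : ℕ, ∃ (k : ℕ) (a : A), (seqWord x i n).IsInfix (substPow θ k a)}

/-- The full orbit of `x` under an (invertible) map `S`, within the set `X`. -/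
def orbitIn {α : Type} (S : α → α) (X : Set α) (x : α) : Set α :=
  {y | y ∈ X ∧ ∃ n : ℕ, S^[n] x = y ∨ S^[n] y = x}

/-- Every `S`-orbit within `X` is dense in `X`. -/
def MinimalOn {α : Type} [TopologicalSpace α] (S : α → α) (X : Set α) : Prop :=
  ∀ x ∈ X, X ⊆ closure (orbitIn S X x)

/-- Every `T`-orbit in `X` is the union of exactly `c` distinct `S`-orbits. -/
def OrbitNumberOn {α : Type} (T S : α → α) (X : Set α) (c : ℕ) : Prop :=
  ∀ x ∈ X, ∃ r : Fin c → α,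
    (∀ i, r i ∈ orbitIn T X x) ∧
    (∀ i j, i ≠ j → r j ∉ orbitIn S X (r i)) ∧
    (∀ y ∈ orbitIn T X x, ∃ i, y ∈ orbitIn S X (r i))

/-- `S` restricts to a homeomorphism of the subset `X`. -/
def RestrictsToHomeomorph {α : Type} [TopologicalSpace α] (S : α → α) (X : Set α) : Prop :=
  ∃ e : X ≃ₜ X, ∀ x : X, (e x : α) = S (x : α)

/-- The systems `(X, S)` and `(Y, R)` are topologically conjugate. -/
def TopConj {α β : Type} [TopologicalSpace α] [TopologicalSpace β]
    (X : Set α) (S : α → α) (Y : Set β) (R : β → β) : Prop :=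
  ∃ (hS : Set.MapsTo S X X) (hR : Set.MapsTo R Y Y) (h : X ≃ₜ Y),
    ∀ x : X, h (Set.MapsTo.restrict S X X hS x) = Set.MapsTo.restrict R Y Y hR (h x)

/-- `(Y, R)` is a topological factor of `(X, S)`. -/
def IsFactorOn {α β : Type} [TopologicalSpace α] [TopologicalSpace β]
    (X : Set α) (S : α → α) (Y : Set β) (R : β → β) : Prop :=
  ∃ F : α → β, Set.MapsTo F X Y ∧ ContinuousOn F X ∧ Set.SurjOn F X Y ∧
    ∀ x ∈ X, F (S x) = R (F x)

/-- `(X, S)` is a Toeplitz flow: it is topologically conjugate to the orbit closure of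
some Toeplitz sequence over some finite alphabet, with the shift map. -/
def IsToeplitzFlow {α : Type} [TopologicalSpace α] (X : Set α) (S : α → α) : Prop :=
  ∃ (B : Type) (_ : Fintype B) (z : ℤ → B), IsToeplitz z ∧
    (letI : TopologicalSpace B := ⊥
     TopConj X S (orbitClosure z) shiftMap)

/-- `Per_p(x)`: the set of positions where `x` is periodic with period `p`. -/
def PerSet {A : Type} (x : ℤ → A) (p : ℕ) : Set ℤ :=
  {k | ∀ n : ℤ, x (k + n * (p : ℤ)) = x k}

/-- `p` is an essential period of `x`. -/
def IsEssentialPeriod {A : Type} (x : ℤ → A) (p : ℕ) : Prop :=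
  0 < p ∧ ¬ ∃ q : ℕ, 0 < q ∧ q < p ∧
    ((fun k => k + (q : ℤ)) '' PerSet x p = PerSet x p) ∧
    (∀ k ∈ PerSet x p, x (k + (q : ℤ)) = x k)

/-- A period structure for a Toeplitz sequence `x`. -/
def IsPeriodStructure {A : Type} (x : ℤ → A) (p : ℕ → ℕ) : Prop :=
  StrictMono p ∧ (∀ k, IsEssentialPeriod x (p k)) ∧
  (∀ k, p k ∣ p (k + 1)) ∧ (⋃ k, PerSet x (p k)) = Set.univ

/-- `x` is a (σ-)periodic sequence. -/
def IsPeriodicSeq {A : Type} (x : ℤ → A) : Prop :=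
  ∃ n : ℕ, 0 < n ∧ ∀ m : ℤ, x (m + (n : ℤ)) = x m

/-- `z` is the bi-infinite concatenation of the `ψ`-images of the letters of `y`,
with `ψ(y₀)` beginning at coordinate `0`. -/
def IsConcat {B C : Type} (ψ : B → List C) (y : ℤ → B) (z : ℤ → C) : Prop :=
  ∃ s : ℤ → ℤ, s 0 = 0 ∧
    (∀ n : ℤ, s (n + 1) = s n + ((ψ (y n)).length : ℤ)) ∧
    (∀ n : ℤ, ∀ j : Fin (ψ (y n)).length, z (s n + (j : ℕ)) = (ψ (y n)).get j)

/-- `p(x,n) = Σ_{i<n} p(Sⁱ x)`. -/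
def psum {X : Type} (p : X → ℕ) (S : X → X) (x : X) (n : ℕ) : ℕ :=
  ∑ i ∈ Finset.range n, p (S^[i] x)


/-- The substitution χ(a) = aab, χ(b) = abb on {a, b} = Fin 2 (a = 0, b = 1). -/
def chi : Fin 2 → List (Fin 2) := fun i => if i = 0 then [0, 0, 1] else [0, 1, 1]

section Statement14Aux

def hk : ℕ → ℕ
  | 0 => 0
  | k+1 => 3^k + hk k

lemma two_hk (k : ℕ) : 2 * hk k + 1 = 3^k := by
  induction k with
  | zero => rfl
  | succ k ih => show 2 * (3^k + hk k) + 1 = 3^(k+1); ring_nf; ring_nf at ih; omega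

lemma hk_lt (k : ℕ) : hk k < 3^k := by have := two_hk k; omega

lemma hk_succ (k : ℕ) : hk (k+1) = 3^k + hk k := rfl

def wf : ℕ → Fin 2 → ℕ → Fin 2
  | 0, v, _ => v
  | k+1, v, r => if r < 3^k then wf k 0 r else if r < 2*3^k then wf k v (r - 3^k) else wf k 1 (r - 2*3^k)

lemma wf_first {k : ℕ} (v : Fin 2) {r : ℕ} (h : r < 3^k) : wf (k+1) v r = wf k 0 r := by
  simp [wf, h]

lemma wf_mid {k : ℕ} (v : Fin 2) {s : ℕ} (h : s < 3^k) : wf (k+1) v (3^k + s) = wf k v s := by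
  have h1 : ¬ (3^k + s < 3^k) := by omega
  have h2 : 3^k + s < 2*3^k := by omega
  simp [wf, h1, h2]

lemma wf_third {k : ℕ} (v : Fin 2) (s : ℕ) : wf (k+1) v (2*3^k + s) = wf k 1 s := by
  have hp : 0 < 3^k := Nat.pow_pos (by norm_num)
  have h1 : ¬ (2*3^k + s < 3^k) := by omega
  have h2 : ¬ (2*3^k + s < 2*3^k) := by omega
  simp only [wf, if_neg h1, if_neg h2]
  congr 1
  omega

lemma wf_special (k : ℕ) (v : Fin 2) : wf k v (hk k) = v := by
  induction k with
  | zero => rfl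
  | succ k ih => rw [hk_succ, wf_mid v (hk_lt k), ih]

lemma pow3_mod_pow3 {j k : ℕ} (h : j ≤ k) (s : ℕ) : (3^k + s) % 3^j = s % 3^j := by
  obtain ⟨d, hd⟩ : 3^j ∣ 3^k := pow_dvd_pow 3 h
  rw [hd, Nat.mul_add_mod]

lemma wf_compat : ∀ k j (v : Fin 2) (r : ℕ), j ≤ k → r < 3^k → r % 3^j ≠ hk j →
    wf k v r = wf j 0 (r % 3^j) := by
  intro k
  induction k with
  | zero =>
    intro j v r hj hr hne
    interval_cases j
    exact absurd (Nat.mod_one r) hne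
  | succ k ih =>
    intro j v r hj hr hne
    have hp : 0 < 3^k := Nat.pow_pos (by norm_num)
    rcases Nat.eq_or_lt_of_le hj with rfl | hjk
    · -- j = k+1, so r % 3^(k+1) = r; goal is v-independence
      rw [Nat.mod_eq_of_lt hr] at hne ⊢
      rcases Nat.lt_or_ge r (3^k) with h1 | h1
      · rw [wf_first v h1, wf_first 0 h1]
      rcases Nat.lt_or_ge r (2*3^k) with h2 | h2
      · have hs : r - 3^k < 3^k := by omega
        have hrw : r = 3^k + (r - 3^k) := by omega
        have hsp : (r - 3^k) % 3^k ≠ hk k := by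
          rw [Nat.mod_eq_of_lt hs]
          intro hE; exact hne (by rw [hk_succ]; omega)
        rw [hrw, wf_mid v hs, wf_mid 0 hs,
          ih k v (r-3^k) le_rfl hs hsp, ih k 0 (r-3^k) le_rfl hs hsp]
      · have hrw : r = 2*3^k + (r - 2*3^k) := by omega
        rw [hrw, wf_third v _, wf_third 0 _]
    · have hj' : j ≤ k := Nat.lt_succ_iff.mp hjk
      rcases Nat.lt_or_ge r (3^k) with h1 | h1
      · rw [wf_first v h1]; exact ih j 0 r hj' h1 hne
      rcases Nat.lt_or_ge r (2*3^k) with h2 | h2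
      · have hs : r - 3^k < 3^k := by omega
        have hrw : r = 3^k + (r - 3^k) := by omega
        have hmod : (r - 3^k) % 3^j = r % 3^j := by conv_rhs => rw [hrw, pow3_mod_pow3 hj']
        rw [hrw, wf_mid v hs, pow3_mod_pow3 hj',
          ih j v (r-3^k) hj' hs (by rw [hmod]; exact hne), hmod]
      · have hs : r - 2*3^k < 3^k := by omega
        have hrw : r = 2*3^k + (r - 2*3^k) := by omega
        have hmod : (r - 2*3^k) % 3^j = r % 3^j := by
          conv_rhs => rw [hrw]
          have : 2*3^k + (r - 2*3^k) = 3^k + (3^k + (r - 2*3^k)) := by ring_nf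
          rw [this, pow3_mod_pow3 hj', pow3_mod_pow3 hj']
        have h2' : 2*3^k + (r - 2*3^k) = 3^k + (3^k + (r - 2*3^k)) := by ring_nf
        rw [hrw, wf_third v _, h2', pow3_mod_pow3 hj', pow3_mod_pow3 hj',
          ih j 1 (r-2*3^k) hj' hs (by rw [hmod]; exact hne), hmod]

-- v-independence off the special position
lemma wf_indep {k : ℕ} (v : Fin 2) {r : ℕ} (hr : r < 3^k) (hne : r ≠ hk k) :
    wf k v r = wf k 0 r := by
  have h := wf_compat k k v r le_rfl hr (by rwa [Nat.mod_eq_of_lt hr])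
  rw [h, wf_compat k k 0 r le_rfl hr (by rwa [Nat.mod_eq_of_lt hr])]



lemma chi_eq (v : Fin 2) : chi v = [0, v, 1] := by fin_cases v <;> rfl

lemma substPow_succ (k : ℕ) (v : Fin 2) :
    substPow chi (k+1) v = substPow chi k 0 ++ substPow chi k v ++ substPow chi k 1 := by
  show (chi v).flatMap (substPow chi k) = _
  rw [chi_eq]
  simp [List.flatMap]

lemma substPow_length (k : ℕ) (v : Fin 2) : (substPow chi k v).length = 3^k := by
  induction k generalizing v with
  | zero => rfl
  | succ k ih => rw [substPow_succ]; simp [ih]; ring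

-- window infix helper
lemma infix_of_getElem {α : Type} {w B : List α} (e : ℕ) (hlen : e + w.length ≤ B.length)
    (h : ∀ j (hj : j < w.length), w[j] = B[e + j]'(by omega)) : w <:+: B := by
  have hw : w = (B.drop e).take w.length := by
    apply List.ext_getElem
    · simp; omega
    · intro i h1 h2
      simp only [List.getElem_take, List.getElem_drop]
      exact h i h1
  rw [hw]
  exact ((B.drop e).take_prefix w.length).isInfix.trans (B.drop_suffix e).isInfix

lemma substPow_eq_ofFn (k : ℕ) (v : Fin 2) :
    substPow chi k v = List.ofFn (fun i : Fin (3^k) => wf k v i) := by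
  induction k generalizing v with
  | zero =>
    simp [substPow, List.ofFn]
    rfl
  | succ k ih =>
    rw [substPow_succ, ih 0, ih v, ih 1]
    apply List.ext_getElem
    · simp; ring
    · intro i h1 h2
      simp only [List.length_ofFn] at h2
      by_cases c1 : i < 3^k
      · rw [List.getElem_append_left (by simp; omega), List.getElem_append_left (by simp; exact c1)]
        simp only [List.getElem_ofFn]
        rw [wf_first v c1]
      · by_cases c2 : i < 2*3^k
        · rw [List.getElem_append_left (by simp; omega), List.getElem_append_right (by simp; omega)]
          simp only [List.getElem_ofFn, List.length_ofFn]
          have : wf (k+1) v i = wf k v (i - 3^k) := by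
            rw [show i = 3^k + (i - 3^k) by omega, wf_mid v (by omega)]
            congr 1
            omega
          rw [this]
        · rw [List.getElem_append_right (by simp; omega)]
          simp only [List.getElem_ofFn, List.length_ofFn]
          have : wf (k+1) v i = wf k 1 (i - 2*3^k) := by
            rw [show i = 2*3^k + (i - 2*3^k) by omega, wf_third v _]
            congr 1
            omega
          rw [this]
          simp only [List.length_append, List.length_ofFn]
          congr 1
          omega

lemma substPow_getElem (k : ℕ) (v : Fin 2) (r : ℕ) (hr : r < 3^k) :
    (substPow chi k v)[r]'(by rw [substPow_length]; exact hr) = wf k v r := by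
  have h := substPow_eq_ofFn k v
  rw [List.getElem_of_eq h, List.getElem_ofFn]

lemma twoBlocks (k : ℕ) (u v : Fin 2) :
    (substPow chi k u ++ substPow chi k v) <:+: substPow chi (k+2) 0 := by
  have B : ∀ w : Fin 2, substPow chi (k+1) w
      = substPow chi k 0 ++ substPow chi k w ++ substPow chi k 1 := substPow_succ k
  have C : substPow chi (k+2) 0
      = substPow chi (k+1) 0 ++ substPow chi (k+1) 0 ++ substPow chi (k+1) 1 := substPow_succ (k+1) 0
  have hC1 : substPow chi (k+1) 1 <:+: substPow chi (k+2) 0 :=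
    ⟨substPow chi (k+1) 0 ++ substPow chi (k+1) 0, [], by rw [C]; simp⟩
  have hC0 : substPow chi (k+1) 0 <:+: substPow chi (k+2) 0 :=
    ⟨[], substPow chi (k+1) 0 ++ substPow chi (k+1) 1, by rw [C]; simp⟩
  have hC01 : (substPow chi (k+1) 0 ++ substPow chi (k+1) 1) <:+: substPow chi (k+2) 0 :=
    ⟨substPow chi (k+1) 0, [], by rw [C]; simp⟩
  fin_cases u <;> fin_cases v
  · exact List.IsInfix.trans ⟨[], substPow chi k 1, by rw [B 0]; simp⟩ hC0
  · exact List.IsInfix.trans ⟨[], substPow chi k 1, by rw [B 1]; simp⟩ hC1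
  · refine List.IsInfix.trans (l₂ := substPow chi (k+1) 0 ++ substPow chi (k+1) 1) ?_ hC01
    exact ⟨substPow chi k 0 ++ substPow chi k 0, substPow chi k 1 ++ substPow chi k 1,
      by rw [B 0, B 1]; simp⟩
  · exact List.IsInfix.trans ⟨substPow chi k 0, [], by rw [B 1]; simp⟩ hC1


/-! ### The Spec predicate -/

def SpecC (C : ℕ → ℤ) : Prop := ∀ k, (3:ℤ)^k ∣ C (k+1) - C k

def SpecR (x : ℤ → Fin 2) (C : ℕ → ℤ) : Prop :=
  ∀ k (m : ℤ), (m + C k) % (3:ℤ)^k ≠ (hk k : ℤ) →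
    x m = wf k 0 ((m + C k) % (3:ℤ)^k).toNat

def Spec (x : ℤ → Fin 2) (C : ℕ → ℤ) : Prop := SpecC C ∧ SpecR x C

lemma specC_mono {C : ℕ → ℤ} (h : SpecC C) {j k : ℕ} (hjk : j ≤ k) :
    (3:ℤ)^j ∣ C k - C j := by
  induction k, hjk using Nat.le_induction with
  | base => simp
  | succ k hjk ih =>
    have : C (k+1) - C j = (C (k+1) - C k) + (C k - C j) := by ring
    rw [this]
    exact dvd_add (dvd_trans (pow_dvd_pow 3 hjk) (h k)) ih

lemma emod_coh {C : ℕ → ℤ} (h : SpecC C) {j k : ℕ} (hjk : j ≤ k) (m : ℤ) :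
    (m + C k) % (3:ℤ)^j = (m + C j) % (3:ℤ)^j := by
  apply Int.ModEq.symm
  apply Int.modEq_iff_dvd.mpr
  have := specC_mono h hjk
  have h2 : (m + C k) - (m + C j) = C k - C j := by ring
  rw [h2]
  exact this

lemma emod_emod_coh {C : ℕ → ℤ} (h : SpecC C) {j k : ℕ} (hjk : j ≤ k) (m : ℤ) :
    ((m + C k) % (3:ℤ)^k) % (3:ℤ)^j = (m + C j) % (3:ℤ)^j := by
  rw [Int.emod_emod_of_dvd _ (pow_dvd_pow 3 hjk), emod_coh h hjk]

lemma pow3_pos (k : ℕ) : (0:ℤ) < 3^k := by positivity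

lemma emod_lt_int (m : ℤ) (k : ℕ) : 0 ≤ m % (3:ℤ)^k ∧ m % (3:ℤ)^k < 3^k :=
  ⟨Int.emod_nonneg m (by positivity), Int.emod_lt_of_pos m (pow3_pos k)⟩

lemma toNat_emod_lt (m : ℤ) (k : ℕ) : (m % (3:ℤ)^k).toNat < 3^k := by
  have h := emod_lt_int m k
  have : ((3:ℤ)^k) = ((3^k : ℕ) : ℤ) := by push_cast; ring
  omega

lemma cast_toNat_emod (m : ℤ) (k : ℕ) : ((m % (3:ℤ)^k).toNat : ℤ) = m % (3:ℤ)^k :=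
  Int.toNat_of_nonneg (emod_lt_int m k).1

/-! ### Membership from Spec -/

lemma seqWord_length {A : Type} (x : ℤ → A) (i : ℤ) (n : ℕ) : (seqWord x i n).length = n := by
  simp [seqWord]

lemma seqWord_getElem {A : Type} (x : ℤ → A) (i : ℤ) (n : ℕ) (j : ℕ) (hj : j < n) :
    (seqWord x i n)[j]'(by rw [seqWord_length]; exact hj) = x (i + j) := by
  simp [seqWord]

theorem mem_of_spec {x : ℤ → Fin 2} {C : ℕ → ℤ} (h : Spec x C) : x ∈ substShift chi := by
  intro i n
  set K := n with hK
  have hn3 : n ≤ 3^K := le_of_lt (Nat.lt_pow_self (by norm_num))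
  set e := (i + C K) % (3:ℤ)^K with he
  set en := e.toNat with hen
  have hen_lt : en < 3^K := toNat_emod_lt _ _
  have hen_cast : (en : ℤ) = e := cast_toNat_emod _ _
  set u := x (i - en + hk K) with hu
  set v := x (i - en + (3^K : ℕ) + hk K) with hv
  have hBigLen : (substPow chi K u ++ substPow chi K v).length = 3^K + 3^K := by
    simp [substPow_length]
  have hgetl : ∀ j : ℕ, (hj : j < 3^K) →
      (substPow chi K u ++ substPow chi K v)[j]'(by omega) = wf K u j := by
    intro j hj
    rw [List.getElem_append_left (by rw [substPow_length]; exact hj)]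
    exact substPow_getElem K u j hj
  have hgetr : ∀ j : ℕ, (hj1 : 3^K ≤ j) → (hj : j < 2*3^K) →
      (substPow chi K u ++ substPow chi K v)[j]'(by omega) = wf K v (j - 3^K) := by
    intro j hj1 hj
    rw [List.getElem_append_right (by rw [substPow_length]; omega)]
    rw [substPow_getElem K v (j - (substPow chi K u).length) (by rw [substPow_length]; omega)]
    congr 1
    rw [substPow_length]
  have claim : ∀ j : ℕ, ∀ _ : j < 2*3^K, x (i - en + j)
      = (substPow chi K u ++ substPow chi K v)[j]'(by omega) := by
    intro j hj
    have hoff : ((i - en + j) + C K) % (3:ℤ)^K = ((j : ℤ)) % (3:ℤ)^K := by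
      have hdvd : (3:ℤ)^K ∣ (i + C K - e) := Int.dvd_self_sub_of_emod_eq rfl
      have h0 : (i - en + j) + C K = (j : ℤ) + (i + C K - e) := by rw [hen_cast]; ring
      rw [h0, Int.add_emod, Int.emod_eq_zero_of_dvd hdvd, add_zero,
        Int.emod_emod_of_dvd _ dvd_rfl]
    have hjcast : ((j:ℤ)) % (3:ℤ)^K = ((j % 3^K : ℕ) : ℤ) := by push_cast; ring
    by_cases hsp : j % 3^K = hk K
    · rcases Nat.lt_or_ge j (3^K) with h1 | h1
      · have hjj : j = hk K := by rwa [Nat.mod_eq_of_lt h1] at hsp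
        rw [hgetl j h1, hjj, wf_special]
      · have hs : j - 3^K < 3^K := by omega
        have h2 : j % 3^K = j - 3^K := by
          rw [show j = 3^K + (j - 3^K) by omega, pow3_mod_pow3 le_rfl, Nat.mod_eq_of_lt hs]
          omega
        have hjj : j = 3^K + hk K := by omega
        rw [hgetr j h1 hj, show j - 3^K = hk K by omega, wf_special, hv]
        congr 1
        rw [hjj]
        push_cast
        ring
    · -- generic positions: use the rule
      have hspZ : ((i - en + j) + C K) % (3:ℤ)^K ≠ (hk K : ℤ) := by
        rw [hoff, hjcast]
        exact_mod_cast fun hE => hsp (by exact_mod_cast hE)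
      have htn : (((i - en + j) + C K) % (3:ℤ)^K).toNat = j % 3^K := by
        rw [hoff, hjcast]; omega
      rw [h.2 K (i - en + j) hspZ, htn]
      rcases Nat.lt_or_ge j (3^K) with h1 | h1
      · rw [hgetl j h1, Nat.mod_eq_of_lt h1]
        exact (wf_indep u h1 (by rwa [Nat.mod_eq_of_lt h1] at hsp)).symm
      · have hs : j - 3^K < 3^K := by omega
        have hmod : j % 3^K = j - 3^K := by
          rw [show j = 3^K + (j - 3^K) by omega, pow3_mod_pow3 le_rfl, Nat.mod_eq_of_lt hs]
          omega
        rw [hgetr j h1 hj, hmod]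
        exact (wf_indep v hs (by rwa [hmod] at hsp)).symm
  refine ⟨K + 2, 0, List.IsInfix.trans ?_ (twoBlocks K u v)⟩
  refine infix_of_getElem en ?_ ?_
  · rw [seqWord_length, hBigLen]; omega
  · intro j hj
    rw [seqWord_length] at hj
    rw [seqWord_getElem x i n j hj]
    have h2 : en + j < 2*3^K := by omega
    rw [← claim (en + j) h2]
    congr 1
    push_cast
    ring


/-! ### Markers and recognizability -/

lemma emod_of_neg {d n : ℤ} (h0 : -n ≤ d) (h1 : d < 0) : d % n = n + d := by
  have h : d % n = (d + n*1) % n := (Int.add_mul_emod_self_left d n 1).symm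
  rw [h, mul_one, Int.emod_eq_of_lt (by omega) (by omega)]
  ring

def MarkerAt (k : ℕ) (y : ℤ → Fin 2) (p : ℤ) : Prop :=
  ∀ d : ℤ, -(hk k : ℤ) ≤ d → d < hk k → y (p + d) = wf k 0 ((d % (3:ℤ)^k).toNat)

lemma d_emod {k : ℕ} {d : ℤ} (h1 : -(hk k : ℤ) ≤ d) (h2 : d < hk k) :
    (d % (3:ℤ)^k ≠ (hk k:ℤ)) ∧
    (0 ≤ d → d % (3:ℤ)^k = d) ∧ (d < 0 → d % (3:ℤ)^k = 3^k + d) := by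
  have hpow : ((3:ℤ)^k) = ((3^k : ℕ) : ℤ) := by push_cast; ring
  have h3 : 2 * hk k + 1 = 3^k := two_hk k
  rcases le_or_gt 0 d with h0 | h0
  · have hd : d % (3:ℤ)^k = d := Int.emod_eq_of_lt h0 (by rw [hpow]; omega)
    refine ⟨by omega, fun _ => hd, by omega⟩
  · have h0' : (0:ℤ) ≤ d + 3^k := by rw [hpow]; omega
    have hd : d % (3:ℤ)^k = 3^k + d := emod_of_neg (by rw [hpow]; omega) h0
    refine ⟨by rw [hd, hpow]; omega, by omega, fun _ => hd⟩

lemma marker_restrict {k : ℕ} {y : ℤ → Fin 2} {p : ℤ} (h : MarkerAt (k+1) y p) :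
    MarkerAt k y p := by
  intro d h1 h2
  have hk1 : (hk (k+1) : ℤ) = 3^k + hk k := by rw [hk_succ]; push_cast; ring
  have h3 : 2 * hk k + 1 = 3^k := two_hk k
  have hpow : ((3:ℤ)^k) = ((3^k : ℕ) : ℤ) := by push_cast; ring
  have hval := h d (by omega) (by omega)
  rw [hval]
  rcases le_or_gt 0 d with h0 | h0
  · have e1 : d % (3:ℤ)^(k+1) = d := Int.emod_eq_of_lt h0 (by push_cast; omega)
    have e2 : d % (3:ℤ)^k = d := (d_emod h1 h2).2.1 h0
    rw [e1, e2]
    obtain ⟨dn, rfl⟩ : ∃ dn : ℕ, d = (dn : ℤ) := ⟨d.toNat, by omega⟩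
    rw [Int.toNat_natCast]
    exact wf_first 0 (by exact_mod_cast lt_trans (by exact_mod_cast h2) (hk_lt k))
  · have h0' : (0:ℤ) ≤ d + 3^(k+1) := by push_cast; omega
    have e1 : d % (3:ℤ)^(k+1) = 3^(k+1) + d := emod_of_neg (by push_cast; omega) h0
    have e2 : d % (3:ℤ)^k = 3^k + d := (d_emod h1 h2).2.2 h0
    rw [e1, e2]
    have hsn : ∃ sn : ℕ, (sn : ℤ) = 3^k + d ∧ sn < 3^k ∧ hk k < sn := by
      refine ⟨(3^k + d).toNat, by omega, by omega, by omega⟩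
    obtain ⟨sn, hsn1, hsn2, hsn3⟩ := hsn
    have e3 : ((3:ℤ)^(k+1) + d).toNat = 2*3^k + sn := by push_cast; omega
    have e4 : ((3:ℤ)^k + d).toNat = sn := by omega
    rw [e3, e4, wf_third 0 sn, wf_indep 1 hsn2 (by omega)]

lemma cut_exists {y : ℤ → Fin 2} {C : ℕ → ℤ} (h : Spec y C) {k : ℕ} {p : ℤ}
    (hp : (p + C k) % (3:ℤ)^k = 0) : MarkerAt k y p := by
  intro d h1 h2
  have hne := (d_emod h1 h2).1
  have hoff : ((p + d) + C k) % (3:ℤ)^k = d % (3:ℤ)^k := by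
    have hdvd : (3:ℤ)^k ∣ (p + C k) := Int.dvd_of_emod_eq_zero hp
    have h0 : (p + d) + C k = d + (p + C k) := by ring
    rw [h0, Int.add_emod, Int.emod_eq_zero_of_dvd hdvd, add_zero,
      Int.emod_emod_of_dvd _ dvd_rfl]
  rw [h.2 k (p + d) (by rw [hoff]; exact hne), hoff]

lemma cut_only {y : ℤ → Fin 2} {C : ℕ → ℤ} (h : Spec y C) :
    ∀ k p, MarkerAt k y p → (p + C k) % (3:ℤ)^k = 0 := by
  intro k
  induction k with
  | zero => intro p _; simp [Int.emod_one]
  | succ k ih =>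
    intro p hm
    have hk0 := ih p (marker_restrict hm)
    have hcohz : (p + C (k+1)) % (3:ℤ)^k = 0 := by rw [emod_coh h.1 (Nat.le_succ k)]; exact hk0
    set E := (p + C (k+1)) % (3:ℤ)^(k+1) with hE
    have hE0 : 0 ≤ E := Int.emod_nonneg _ (by positivity)
    have hE1 : E < 3^(k+1) := Int.emod_lt_of_pos _ (pow3_pos (k+1))
    have hEmod : E % (3:ℤ)^k = 0 := by
      rw [hE, Int.emod_emod_of_dvd _ (pow_dvd_pow 3 (Nat.le_succ k))]
      exact hcohz
    obtain ⟨t, ht⟩ := Int.dvd_of_emod_eq_zero hEmod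
    have hpk := pow3_pos k
    have ht0 : 0 ≤ t := nonneg_of_mul_nonneg_right (by omega) hpk
    have ht3 : t < 3 := by
      by_contra hc
      push_neg at hc
      have : (3:ℤ)^k * 3 ≤ 3^k * t := by exact mul_le_mul_of_nonneg_left hc (le_of_lt hpk)
      have h31 : ((3:ℤ)^(k+1)) = 3^k * 3 := by ring
      omega
    -- offset computation helper
    have hoffE : ∀ d : ℤ, ((p + d) + C (k+1)) % (3:ℤ)^(k+1) = (d + E) % (3:ℤ)^(k+1) := by
      intro d
      have hdvd : (3:ℤ)^(k+1) ∣ (p + C (k+1)) - E := Int.dvd_self_sub_of_emod_eq rfl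
      have h0 : (p + d) + C (k+1) = (d + E) + ((p + C (k+1)) - E) := by ring
      rw [h0, Int.add_emod, Int.emod_eq_zero_of_dvd hdvd, add_zero,
        Int.emod_emod_of_dvd _ dvd_rfl]
    have hk1 : (hk (k+1) : ℤ) = 3^k + hk k := by rw [hk_succ]; push_cast; ring
    have h3 : 2 * hk k + 1 = 3^k := two_hk k
    have h3' : ((3:ℤ)^k) = ((3^k : ℕ):ℤ) := by push_cast; ring
    have h31' : ((3:ℤ)^(k+1)) = ((3^(k+1) : ℕ):ℤ) := by push_cast; ring
    interval_cases t
    · -- E = 0 : done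
      omega
    · -- E = 3^k : contradiction via probe d = -(hk k) - 1
      exfalso
      have hEv : E = 3^k := by omega
      set d : ℤ := -(hk k : ℤ) - 1 with hd
      have hmv := hm d (by omega) (by omega)
      have e1 : d % (3:ℤ)^(k+1) = ((2*3^k + hk k : ℕ) : ℤ) := by
        have := (d_emod (k := k+1) (d := d) (by omega) (by omega)).2.2 (by omega)
        rw [this]
        push_cast
        omega
      rw [e1, Int.toNat_natCast, wf_third 0 (hk k), wf_special] at hmv
      -- actual value via the rule
      have hoffd : ((p + d) + C (k+1)) % (3:ℤ)^(k+1) = ((hk k : ℕ) : ℤ) := by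
        rw [hoffE d]
        have : d + E = (hk k : ℤ) := by omega
        rw [this, Int.emod_eq_of_lt (by omega) (by omega)]
      have hrule := h.2 (k+1) (p + d) (by rw [hoffd]; omega)
      rw [hoffd, Int.toNat_natCast, wf_first 0 (hk_lt k), wf_special] at hrule
      rw [hmv] at hrule
      exact absurd hrule (by decide)
    · -- E = 2*3^k : contradiction via probe d = hk k
      exfalso
      have hEv : E = 2*3^k := by omega
      set d : ℤ := (hk k : ℤ) with hd
      have hmv := hm d (by omega) (by omega)
      have e1 : d % (3:ℤ)^(k+1) = ((hk k : ℕ) : ℤ) := by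
        rw [Int.emod_eq_of_lt (by omega) (by omega)]
      rw [e1, Int.toNat_natCast, wf_first 0 (hk_lt k), wf_special] at hmv
      have hoffd : ((p + d) + C (k+1)) % (3:ℤ)^(k+1) = ((2*3^k + hk k : ℕ) : ℤ) := by
        rw [hoffE d]
        have : d + E = ((2*3^k + hk k : ℕ) : ℤ) := by push_cast; omega
        rw [this, Int.emod_eq_of_lt (by push_cast; omega) (by push_cast; omega)]
      have hrule := h.2 (k+1) (p + d) (by rw [hoffd]; push_cast; omega)
      rw [hoffd, Int.toNat_natCast, wf_third 0 (hk k), wf_special] at hrule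
      rw [hmv] at hrule
      exact absurd hrule (by decide)


/-! ### The canonical point xi and Spec for members -/

lemma wf_emod_compat {j K : ℕ} (hjK : j ≤ K) (m : ℤ) (hne : m % (3:ℤ)^j ≠ (hk j : ℤ)) :
    wf K 0 ((m % (3:ℤ)^K).toNat) = wf j 0 ((m % (3:ℤ)^j).toNat) := by
  set r := (m % (3:ℤ)^K).toNat with hr
  have hrlt : r < 3^K := toNat_emod_lt _ _
  have hcast : (r : ℤ) = m % (3:ℤ)^K := cast_toNat_emod _ _
  have hjcast : ((3:ℤ)^j) = ((3^j : ℕ) : ℤ) := by push_cast; ring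
  have hmm : (m % (3:ℤ)^K) % (3:ℤ)^j = m % (3:ℤ)^j :=
    Int.emod_emod_of_dvd _ (pow_dvd_pow 3 hjK)
  have hmod : r % 3^j = (m % (3:ℤ)^j).toNat := by
    have h1 : ((r % 3^j : ℕ) : ℤ) = (r:ℤ) % ((3^j:ℕ):ℤ) := by push_cast; ring
    have h2 : (0:ℤ) ≤ m % (3:ℤ)^j := Int.emod_nonneg _ (by positivity)
    rw [hcast, ← hjcast, hmm] at h1
    omega
  have hne' : r % 3^j ≠ hk j := by
    intro hE
    apply hne
    have h2 : (0:ℤ) ≤ m % (3:ℤ)^j := Int.emod_nonneg _ (by positivity)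
    rw [hE] at hmod
    omega
  rw [wf_compat K j 0 r hjK hrlt hne', hmod]

def xiSeq : ℤ → Fin 2 := fun m => wf (m.natAbs + 1) 0 ((m % (3:ℤ)^(m.natAbs + 1)).toNat)

lemma xi_base_ne (m : ℤ) : m % (3:ℤ)^(m.natAbs+1) ≠ (hk (m.natAbs+1) : ℤ) := by
  set A := m.natAbs + 1 with hA
  have h1 : m.natAbs < 3^m.natAbs := Nat.lt_pow_self (by norm_num)
  have h3 : 2*hk A + 1 = 3^A := two_hk A
  have hps : (3:ℕ)^A = 3^m.natAbs * 3 := pow_succ 3 m.natAbs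
  have hpow : ((3:ℤ)^A) = ((3^A : ℕ) : ℤ) := by push_cast; ring
  rcases le_or_gt 0 m with h0 | h0
  · rw [Int.emod_eq_of_lt h0 (by omega)]
    omega
  · rw [emod_of_neg (by omega) h0]
    omega

lemma spec_xi : Spec xiSeq (fun _ => 0) := by
  constructor
  · intro k; simp
  · intro k m hne
    rw [add_zero] at hne ⊢
    set A := m.natAbs + 1 with hA
    set K := max A k with hK
    have h1 : xiSeq m = wf A 0 ((m % (3:ℤ)^A).toNat) := rfl
    rw [h1, ← wf_emod_compat (le_max_left A k) m (xi_base_ne m),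
      wf_emod_compat (le_max_right A k) m hne]

lemma xi_block0 (K : ℕ) : ∀ j : ℕ, j < 3^K → xiSeq ((j:ℤ)) = wf K 0 j := by
  intro j hj
  have h3 : 2 * hk K + 1 = 3^K := two_hk K
  have hpow : ((3:ℤ)^K) = ((3^K : ℕ) : ℤ) := by push_cast; ring
  have hk1 : (hk (K+1) : ℤ) = 3^K + hk K := by rw [hk_succ]; push_cast; ring
  have hpow1 : ((3:ℤ)^(K+1)) = 3 * (3:ℤ)^K := by ring
  by_cases hsp : j = hk K
  · subst hsp
    have hne : ((hk K : ℤ)) % (3:ℤ)^(K+1) ≠ (hk (K+1) : ℤ) := by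
      rw [Int.emod_eq_of_lt (by omega) (by omega)]
      omega
    have h := spec_xi.2 (K+1) ((hk K : ℤ)) (by rw [add_zero]; exact hne)
    rw [add_zero] at h
    rw [h, Int.emod_eq_of_lt (by omega) (by omega), Int.toNat_natCast]
    exact wf_first 0 (hk_lt K)
  · have hne : ((j:ℤ)) % (3:ℤ)^K ≠ (hk K : ℤ) := by
      rw [Int.emod_eq_of_lt (by positivity) (by omega)]
      omega
    have h := spec_xi.2 K ((j:ℤ)) (by rw [add_zero]; exact hne)
    rw [add_zero] at h
    rw [h, Int.emod_eq_of_lt (by positivity) (by omega), Int.toNat_natCast]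

lemma xi_block1 (K : ℕ) : ∀ j : ℕ, j < 3^K → xiSeq (-((3:ℤ)^K) + (j:ℤ)) = wf K 1 j := by
  intro j hj
  have h3 : 2 * hk K + 1 = 3^K := two_hk K
  have hpow : ((3:ℤ)^K) = ((3^K : ℕ) : ℤ) := by push_cast; ring
  have hk1 : (hk (K+1) : ℤ) = 3^K + hk K := by rw [hk_succ]; push_cast; ring
  have hpow1 : ((3:ℤ)^(K+1)) = 3 * (3:ℤ)^K := by ring
  by_cases hsp : j = hk K
  · subst hsp
    have hval : (-((3:ℤ)^K) + (hk K:ℤ)) % (3:ℤ)^(K+1) = ((2*3^K + hk K : ℕ) : ℤ) := by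
      rw [emod_of_neg (by omega) (by omega)]
      push_cast
      ring_nf
    have hne : (-((3:ℤ)^K) + (hk K:ℤ)) % (3:ℤ)^(K+1) ≠ (hk (K+1) : ℤ) := by
      rw [hval]; push_cast; omega
    have h := spec_xi.2 (K+1) (-((3:ℤ)^K) + (hk K:ℤ)) (by rw [add_zero]; exact hne)
    rw [add_zero, hval, Int.toNat_natCast, wf_third 0 (hk K)] at h
    exact h
  · have hoff : (-((3:ℤ)^K) + (j:ℤ)) % (3:ℤ)^K = (j:ℤ) := by
      rw [emod_of_neg (by omega) (by omega)]
      ring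
    have hne : (-((3:ℤ)^K) + (j:ℤ)) % (3:ℤ)^K ≠ (hk K : ℤ) := by rw [hoff]; omega
    have h := spec_xi.2 K _ (by rw [add_zero]; exact hne)
    rw [add_zero, hoff, Int.toNat_natCast] at h
    rw [h, wf_indep 1 hj hsp]

lemma xi_block (K : ℕ) (v : Fin 2) :
    ∀ j : ℕ, j < 3^K → xiSeq ((if v = 0 then 0 else -((3:ℤ)^K)) + (j:ℤ)) = wf K v j := by
  intro j hj
  by_cases hv : v = 0
  · subst hv
    rw [if_pos rfl, zero_add]
    exact xi_block0 K j hj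
  · have hv1 : v = 1 := by omega
    subst hv1
    rw [if_neg hv]
    exact xi_block1 K j hj

/-- Every coordinate window of a member of the subshift occurs in `xiSeq`. -/
lemma transfer {x : ℤ → Fin 2} (hx : x ∈ substShift chi) (i : ℤ) (n : ℕ) :
    ∃ s : ℤ, ∀ m : ℤ, i ≤ m → m < i + n → x m = xiSeq (s + m) := by
  obtain ⟨k, a, pre, suf, heq⟩ := hx i n
  have hlen : pre.length + (n + suf.length) = 3^k := by
    have := congrArg List.length heq
    simp [seqWord_length, substPow_length] at this
    omega
  set base : ℤ := if a = 0 then (0:ℤ) else -((3:ℤ)^k) with hbase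
  refine ⟨base + pre.length - i, ?_⟩
  intro m hm1 hm2
  obtain ⟨j, hj⟩ : ∃ j : ℕ, (j:ℤ) = m - i := ⟨(m - i).toNat, by omega⟩
  have hjn : j < n := by omega
  have hget : x m = wf k a (pre.length + j) := by
    have h1 : (seqWord x i n)[j]'(by rw [seqWord_length]; exact hjn) = x m := by
      rw [seqWord_getElem x i n j hjn]
      congr 1
      omega
    rw [← h1]
    have h2 : (pre ++ seqWord x i n ++ suf)[pre.length + j]'(by
        simp [seqWord_length]; omega) = (seqWord x i n)[j]'(by rw [seqWord_length]; exact hjn) := by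
      rw [List.getElem_append_left (by simp [seqWord_length]; omega),
        List.getElem_append_right (by omega)]
      congr 1
      omega
    rw [← h2, List.getElem_of_eq heq]
    exact substPow_getElem k a (pre.length + j) (by omega)
  rw [hget]
  have := xi_block k a (pre.length + j) (by omega)
  rw [← this]
  congr 1
  push_cast
  omega


lemma marker_exists {x : ℤ → Fin 2} (hx : x ∈ substShift chi) (k : ℕ) :
    ∃ p : ℤ, MarkerAt k x p := by
  set n : ℕ := 3^k + 2*hk k + 1 with hn
  obtain ⟨s, hs⟩ := transfer hx (-(hk k : ℤ)) n
  set q : ℤ := s + ((-s) % (3:ℤ)^k) with hq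
  have hq0 : q % (3:ℤ)^k = 0 := by
    rw [hq, Int.add_emod, Int.emod_emod_of_dvd _ dvd_rfl, ← Int.add_emod]
    simp
  have hoff0 : 0 ≤ (-s) % (3:ℤ)^k := Int.emod_nonneg _ (by positivity)
  have hoff1 : (-s) % (3:ℤ)^k < 3^k := Int.emod_lt_of_pos _ (pow3_pos k)
  have hpow : ((3:ℤ)^k) = ((3^k : ℕ) : ℤ) := by push_cast; ring
  refine ⟨q - s, ?_⟩
  intro d h1 h2
  have hmx : MarkerAt k xiSeq q := cut_exists spec_xi (by rw [add_zero]; exact hq0)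
  have := hmx d h1 h2
  rw [← this]
  have hr := hs (q - s + d) (by push_cast; omega) (by push_cast; omega)
  rw [hr]
  congr 1
  ring

lemma marker_congr {x : ℤ → Fin 2} (hx : x ∈ substShift chi) {k : ℕ} {p p' : ℤ}
    (h1 : MarkerAt k x p) (h2 : MarkerAt k x p') : (p - p') % (3:ℤ)^k = 0 := by
  set i : ℤ := min p p' - hk k with hi
  set top : ℤ := max p p' + hk k with htop
  set n : ℕ := (top - i).toNat with hn
  have f1 : min p p' ≤ p := min_le_left _ _
  have f2 : min p p' ≤ p' := min_le_right _ _
  have f3 : p ≤ max p p' := le_max_left _ _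
  have f4 : p' ≤ max p p' := le_max_right _ _
  have f5 : (0:ℤ) ≤ (hk k : ℤ) := by positivity
  have hin : i + (n:ℤ) = top := by rw [hn]; omega
  obtain ⟨s, hs⟩ := transfer hx i n
  have key : ∀ r : ℤ, MarkerAt k x r → min p p' ≤ r → r ≤ max p p' → (s + r) % (3:ℤ)^k = 0 := by
    intro r hmr hr1 hr2
    have hmk : MarkerAt k xiSeq (s + r) := by
      intro d hd1 hd2
      have hv := hmr d hd1 hd2
      rw [← hv, show s + r + d = s + (r + d) by ring]
      exact (hs (r + d) (by omega) (by omega)).symm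
    have h := cut_only spec_xi k (s + r) hmk
    rw [add_zero] at h
    exact h
  have e1 := key p h1 f1 f3
  have e2 := key p' h2 f2 f4
  have d1 : (3:ℤ)^k ∣ s + p := Int.dvd_of_emod_eq_zero e1
  have d2 : (3:ℤ)^k ∣ s + p' := Int.dvd_of_emod_eq_zero e2
  have h0 : p - p' = (s + p) - (s + p') := by ring
  rw [h0]
  exact Int.emod_eq_zero_of_dvd (dvd_sub d1 d2)

open Classical in
/-- The canonical cut-structure function. -/
noncomputable def CS (x : ℤ → Fin 2) (k : ℕ) : ℤ :=
  if h : ∃ p : ℤ, MarkerAt k x p then -h.choose else 0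

lemma CS_marker {x : ℤ → Fin 2} (hx : x ∈ substShift chi) (k : ℕ) :
    MarkerAt k x (-(CS x k)) := by
  have h := marker_exists hx k
  rw [CS, dif_pos h, neg_neg]
  exact h.choose_spec

theorem spec_of_mem {x : ℤ → Fin 2} (hx : x ∈ substShift chi) : Spec x (CS x) := by
  have hM : ∀ k, MarkerAt k x (-(CS x k)) := CS_marker hx
  constructor
  · intro k
    have h2 := marker_restrict (hM (k+1))
    have h3 := marker_congr hx h2 (hM k)
    have h4 : -CS x (k+1) - -CS x k = -(CS x (k+1) - CS x k) := by ring
    rw [h4] at h3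
    exact (dvd_neg).mp (Int.dvd_of_emod_eq_zero h3)
  · intro k m hne
    set p : ℤ := -(CS x k) with hp
    set i : ℤ := min m (p - hk k) with hi
    set top : ℤ := max (m+1) (p + hk k) with htop
    set n : ℕ := (top - i).toNat with hn
    have f1 : i ≤ m := by rw [hi]; exact min_le_left _ _
    have f2 : i ≤ p - hk k := by rw [hi]; exact min_le_right _ _
    have f3 : m + 1 ≤ top := by rw [htop]; exact le_max_left _ _
    have f4 : p + hk k ≤ top := by rw [htop]; exact le_max_right _ _
    have f5 : (0:ℤ) ≤ (hk k : ℤ) := by positivity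
    have hin : i + (n:ℤ) = top := by rw [hn]; omega
    obtain ⟨s, hs⟩ := transfer hx i n
    have hmk : MarkerAt k xiSeq (s + p) := by
      intro d hd1 hd2
      have hv := hM k d hd1 hd2
      rw [← hp] at hv
      rw [← hv, show s + p + d = s + (p + d) by ring]
      exact (hs (p + d) (by omega) (by omega)).symm
    have hcut : (s + p) % (3:ℤ)^k = 0 := by
      have h := cut_only spec_xi k (s + p) hmk
      rw [add_zero] at h
      exact h
    have hxm : x m = xiSeq (s + m) := hs m (by omega) (by omega)
    have hoffeq : (s + m) % (3:ℤ)^k = (m + CS x k) % (3:ℤ)^k := by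
      have hd : (3:ℤ)^k ∣ s + p := Int.dvd_of_emod_eq_zero hcut
      obtain ⟨t, ht⟩ := hd
      have h0 : s + m = (m + CS x k) + (3:ℤ)^k * t := by rw [← ht, hp]; ring
      rw [h0, Int.add_mul_emod_self_left]
    have hxir := spec_xi.2 k (s + m) (by rw [add_zero, hoffeq]; exact hne)
    rw [add_zero, hoffeq] at hxir
    rw [hxm, hxir]

lemma spec_unique {x : ℤ → Fin 2} {C C' : ℕ → ℤ} (h : Spec x C) (h' : Spec x C') (k : ℕ) :
    (3:ℤ)^k ∣ C k - C' k := by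
  have hm : MarkerAt k x (-(C k)) := cut_exists h (by simp)
  have h2 := cut_only h' k (-(C k)) hm
  have h3 : -(C k) + C' k = -(C k - C' k) := by ring
  rw [h3] at h2
  exact (dvd_neg).mp (Int.dvd_of_emod_eq_zero h2)

lemma spec_shift {x : ℤ → Fin 2} {C : ℕ → ℤ} (h : Spec x C) :
    Spec (shiftMap x) (fun k => C k + 1) := by
  constructor
  · intro k
    have := h.1 k
    simpa using this
  · intro k m hne
    have h0 : m + (C k + 1) = (m + 1) + C k := by ring
    rw [h0] at hne ⊢
    exact h.2 k (m+1) hne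

lemma shift_mem {x : ℤ → Fin 2} (hx : x ∈ substShift chi) : shiftMap x ∈ substShift chi := by
  intro i n
  obtain ⟨k, a, hinf⟩ := hx (i+1) n
  refine ⟨k, a, ?_⟩
  have : seqWord (shiftMap x) i n = seqWord x (i+1) n := by
    apply List.ext_getElem (by simp [seqWord_length])
    intro j h1 h2
    rw [seqWord_length] at h1 h2
    rw [seqWord_getElem _ _ _ j h1, seqWord_getElem _ _ _ j h1]
    show x (i + j + 1) = x (i + 1 + j)
    congr 1
    ring
  rw [this]
  exact hinf


/-! ### The factor map -/

lemma emod_congr {a b : ℤ} (k : ℕ) (h : (3:ℤ)^k ∣ a - b) (m : ℤ) :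
    (m + a) % (3:ℤ)^k = (m + b) % (3:ℤ)^k := by
  obtain ⟨t, ht⟩ := h
  have h0 : m + a = (m + b) + (3:ℤ)^k * t := by omega
  rw [h0, Int.add_mul_emod_self_left]

def DD (C : ℕ → ℤ) (k : ℕ) : ℤ := -(hk k : ℤ) * (C k - hk k) + hk k

lemma hk_cast_succ (k : ℕ) : (hk (k+1) : ℤ) = (hk k : ℤ) + 3^k := by
  rw [hk_succ]; push_cast; ring

lemma hk_cast_pow (k : ℕ) : 2 * (hk k : ℤ) + 1 = 3^k := by
  have h := two_hk k
  exact_mod_cast congrArg (Nat.cast : ℕ → ℤ) h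

lemma specC_DD {C : ℕ → ℤ} (h : SpecC C) : SpecC (DD C) := by
  intro k
  obtain ⟨t, ht⟩ := h k
  have hc : C (k+1) = C k + 3^k * t := by omega
  refine ⟨-(C k - hk k) - ((hk k : ℤ) + 3^k)*(t-1) + 1, ?_⟩
  rw [DD, DD, hc, hk_cast_succ]
  ring

lemma DD_two {C : ℕ → ℤ} (k : ℕ) : (3:ℤ)^k ∣ 2 * DD C k - (C k + hk k) := by
  refine ⟨-(C k - hk k), ?_⟩
  rw [DD, ← hk_cast_pow]
  ring

lemma DD_congr {C C' : ℕ → ℤ} (k : ℕ) (h : (3:ℤ)^k ∣ C k - C' k) :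
    (3:ℤ)^k ∣ DD C k - DD C' k := by
  obtain ⟨t, ht⟩ := h
  refine ⟨-(hk k : ℤ) * t, ?_⟩
  rw [DD, DD]
  have : C k = C' k + 3^k * t := by omega
  rw [this]
  ring

open Classical in
noncomputable def ruleSeq (C : ℕ → ℤ) (g : ℤ → Fin 2) : ℤ → Fin 2 := fun m =>
  if h : ∃ k, (m + C k) % (3:ℤ)^k ≠ (hk k : ℤ) then
    wf (Nat.find h) 0 (((m + C (Nat.find h)) % (3:ℤ)^(Nat.find h)).toNat)
  else g m

lemma ruleSeq_spec {C : ℕ → ℤ} (g : ℤ → Fin 2) (hC : SpecC C) : Spec (ruleSeq C g) C := by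
  refine ⟨hC, ?_⟩
  intro k m hne
  have hex : ∃ k, (m + C k) % (3:ℤ)^k ≠ (hk k : ℤ) := ⟨k, hne⟩
  rw [ruleSeq]
  rw [dif_pos hex]
  set k0 := Nat.find hex with hk0
  have hle : k0 ≤ k := Nat.find_le hne
  have hsp0 : (m + C k0) % (3:ℤ)^k0 ≠ (hk k0 : ℤ) := Nat.find_spec hex
  have hco : (m + C k) % (3:ℤ)^k0 = (m + C k0) % (3:ℤ)^k0 :=
    emod_congr k0 (specC_mono hC hle) m
  have := wf_emod_compat hle (m + C k) (by rw [hco]; exact hsp0)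
  rw [this, hco]

lemma ruleSeq_special {C : ℕ → ℤ} (g : ℤ → Fin 2) {m : ℤ}
    (h : ∀ k, (m + C k) % (3:ℤ)^k = (hk k : ℤ)) : ruleSeq C g m = g m := by
  rw [ruleSeq]
  rw [dif_neg (by push_neg; exact h)]

lemma spec_values {y : ℤ → Fin 2} {C : ℕ → ℤ} (hy : Spec y C) {k : ℕ} {m : ℤ}
    (hne : (m + C k) % (3:ℤ)^k ≠ (hk k : ℤ)) :
    y m = wf k 0 ((m + C k) % (3:ℤ)^k).toNat := hy.2 k m hne

/-- Two Spec sequences with congruent structures agree off the special point. -/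
lemma spec_ext {y y' : ℤ → Fin 2} {C C' : ℕ → ℤ} (hy : Spec y C) (hy' : Spec y' C')
    (hcc : ∀ k, (3:ℤ)^k ∣ C k - C' k) (m : ℤ)
    (hspecial : (∀ k, (m + C k) % (3:ℤ)^k = (hk k : ℤ)) → y m = y' m) : y m = y' m := by
  by_cases hall : ∀ k, (m + C k) % (3:ℤ)^k = (hk k : ℤ)
  · exact hspecial hall
  · push_neg at hall
    obtain ⟨k, hne⟩ := hall
    have hco : (m + C k) % (3:ℤ)^k = (m + C' k) % (3:ℤ)^k := emod_congr k (hcc k) m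
    rw [hy.2 k m hne, hy'.2 k m (by rw [← hco]; exact hne), hco]

lemma emod_eq_emod {a b : ℤ} (k : ℕ) (h : (3:ℤ)^k ∣ a - b) : a % (3:ℤ)^k = b % (3:ℤ)^k := by
  have := emod_congr k h 0
  simpa using this

/-- The factor map: `F x m = x(2m) + 1`. -/
def FF (x : ℤ → Fin 2) : ℤ → Fin 2 := fun m => x (2*m) + 1

lemma fin2_flip_flip (a : Fin 2) : a + 1 + 1 = a := by fin_cases a <;> rfl

theorem spec_FF {x : ℤ → Fin 2} (hx : x ∈ substShift chi) : Spec (FF x) (DD (CS x)) := by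
  classical
  have hxs : Spec x (CS x) := spec_of_mem hx
  have hC : SpecC (DD (CS x)) := specC_DD hxs.1
  refine ⟨hC, ?_⟩
  intro k m hne
  have hex : ∃ k, (m + DD (CS x) k) % (3:ℤ)^k ≠ (hk k:ℤ) := ⟨k, hne⟩
  have hle : Nat.find hex ≤ k := Nat.find_le hne
  have hk1pos : Nat.find hex ≠ 0 := by
    intro h0
    apply Nat.find_spec hex
    rw [h0]
    show (m + DD (CS x) 0) % (3:ℤ)^0 = ((hk 0 : ℕ) : ℤ)
    rw [pow_zero, Int.emod_one]
    rfl
  obtain ⟨j, hj⟩ : ∃ j, Nat.find hex = j + 1 := ⟨Nat.find hex - 1, by omega⟩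
  have hminj : (m + DD (CS x) j) % (3:ℤ)^j = (hk j : ℤ) := by
    by_contra hcon
    have hcontra : Nat.find hex ≤ j := Nat.find_le hcon
    omega
  have hnej1 : (m + DD (CS x) (j+1)) % (3:ℤ)^(j+1) ≠ (hk (j+1) : ℤ) := by
    rw [← hj]
    exact Nat.find_spec hex
  set e : ℤ := (m + DD (CS x) (j+1)) % (3:ℤ)^(j+1) with he
  have he0 : 0 ≤ e := Int.emod_nonneg _ (by positivity)
  have he1 : e < 3^(j+1) := Int.emod_lt_of_pos _ (pow3_pos (j+1))
  have hcohe : e % (3:ℤ)^j = (hk j : ℤ) := by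
    rw [he, emod_emod_coh hC (Nat.le_succ j) m]
    exact hminj
  obtain ⟨s, hs⟩ : (3:ℤ)^j ∣ e - (hk j:ℤ) := Int.dvd_self_sub_of_emod_eq hcohe
  have hpj := pow3_pos j
  have hhj := hk_cast_pow j
  have hhj1 := hk_cast_pow (j+1)
  have hcs : (hk (j+1) : ℤ) = (hk j:ℤ) + 3^j := hk_cast_succ j
  have hp1 : ((3:ℤ)^(j+1)) = 3 * 3^j := by ring
  have hs0 : 0 ≤ s := by
    rcases le_or_gt 0 s with h | h
    · exact h
    · exfalso
      have h1 : s ≤ -1 := by omega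
      have h2 : (3:ℤ)^j * s ≤ 3^j * (-1) := mul_le_mul_of_nonneg_left h1 (le_of_lt hpj)
      omega
  have hs3 : s < 3 := by
    by_contra hcon
    push_neg at hcon
    have h2 : (3:ℤ)^j * 3 ≤ 3^j * s := mul_le_mul_of_nonneg_left hcon (le_of_lt hpj)
    omega
  have hs1 : s ≠ 1 := by
    intro h1
    apply hnej1
    rw [h1, mul_one] at hs
    omega
  have hco : (m + DD (CS x) k) % (3:ℤ)^(j+1) = e := by
    rw [he]
    exact emod_congr (j+1) (specC_mono hC (by omega)) m
  have hgoal : wf k 0 ((m + DD (CS x) k) % (3:ℤ)^k).toNat = wf (j+1) 0 e.toNat := by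
    rw [wf_emod_compat (by omega : j+1 ≤ k) (m + DD (CS x) k) (by rw [hco]; exact hnej1), hco]
  rw [hgoal]
  have hu : ((2*m) + CS x (j+1)) % (3:ℤ)^(j+1) = (2*e - (hk (j+1):ℤ)) % (3:ℤ)^(j+1) := by
    apply emod_eq_emod
    have d1 : (3:ℤ)^(j+1) ∣ 2 * DD (CS x) (j+1) - (CS x (j+1) + (hk (j+1):ℤ)) := DD_two (j+1)
    have d2 : (3:ℤ)^(j+1) ∣ (m + DD (CS x) (j+1)) - e := Int.dvd_self_sub_of_emod_eq rfl
    have h0 : (2*m) + CS x (j+1) - (2*e - (hk (j+1):ℤ)) =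
        2*((m + DD (CS x) (j+1)) - e) - (2 * DD (CS x) (j+1) - (CS x (j+1) + (hk (j+1):ℤ))) := by
      ring
    rw [h0]
    exact dvd_sub (Dvd.dvd.mul_left d2 2) d1
  interval_cases s
  · -- s = 0 : e = hk j ; value 0 ; x(2m) = 1
    have hev2 : e.toNat = hk j := by omega
    have huval : (2*e - (hk (j+1):ℤ)) % (3:ℤ)^(j+1) = ((2*3^j + hk j : ℕ) : ℤ) := by
      rw [emod_of_neg (by push_cast; omega) (by omega)]
      push_cast
      omega
    have hune : ((2*m) + CS x (j+1)) % (3:ℤ)^(j+1) ≠ (hk (j+1) : ℤ) := by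
      rw [hu, huval]
      push_cast
      omega
    have hx2m := hxs.2 (j+1) (2*m) hune
    rw [hu, huval, Int.toNat_natCast, wf_third 0 (hk j), wf_special] at hx2m
    show x (2*m) + 1 = _
    rw [hx2m, hev2, wf_first 0 (hk_lt j), wf_special]
    rfl
  · exact absurd rfl hs1
  · -- s = 2 : e = 2*3^j + hk j ; value 1 ; x(2m) = 0
    have hev2 : e.toNat = 2*3^j + hk j := by
      have hcast : ((2*3^j + hk j : ℕ) : ℤ) = 2*(3:ℤ)^j + ((hk j:ℕ):ℤ) := by push_cast; ring
      omega
    have huval : (2*e - (hk (j+1):ℤ)) % (3:ℤ)^(j+1) = ((hk j : ℕ) : ℤ) := by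
      have h0 : 2*e - (hk (j+1):ℤ) = ((hk j:ℕ):ℤ) + (3:ℤ)^(j+1) * 1 := by push_cast; omega
      rw [h0, Int.add_mul_emod_self_left, Int.emod_eq_of_lt (by positivity) (by omega)]
    have hune : ((2*m) + CS x (j+1)) % (3:ℤ)^(j+1) ≠ (hk (j+1) : ℤ) := by
      rw [hu, huval]
      omega
    have hx2m := hxs.2 (j+1) (2*m) hune
    rw [hu, huval, Int.toNat_natCast, wf_first 0 (hk_lt j), wf_special] at hx2m
    show x (2*m) + 1 = _
    rw [hx2m, hev2, wf_third 0 (hk j), wf_special]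
    rfl

lemma FF_mem {x : ℤ → Fin 2} (hx : x ∈ substShift chi) : FF x ∈ substShift chi :=
  mem_of_spec (spec_FF hx)

lemma FF_equivariant (x : ℤ → Fin 2) (m : ℤ) :
    FF (shiftMap (shiftMap x)) m = FF x (m + 1) := by
  show x (2*m + 1 + 1) + 1 = x (2*(m+1)) + 1
  congr 2
  ring

lemma FF_continuous : Continuous FF := by
  apply continuous_pi
  intro m
  have h : (fun x : ℤ → Fin 2 => FF x m)
      = (fun a : Fin 2 => a + 1) ∘ (fun x : ℤ → Fin 2 => x (2*m)) := rfl
  rw [h]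
  exact Continuous.comp continuous_of_discreteTopology (continuous_apply (2*m))

lemma FF_surj {z : ℤ → Fin 2} (hz : z ∈ substShift chi) :
    ∃ x ∈ substShift chi, FF x = z := by
  classical
  set Cz := CS z with hCz
  have hzs : Spec z Cz := spec_of_mem hz
  set C2 : ℕ → ℤ := fun k => 2*Cz k - 2*(hk k:ℤ) - 2*(hk k:ℤ)^2 with hC2
  have hC2spec : SpecC C2 := by
    intro k
    obtain ⟨t, ht⟩ := hzs.1 k
    have hc : Cz (k+1) = Cz k + 3^k * t := by omega
    refine ⟨2*t - 2 - 4*(hk k:ℤ) - 2*3^k, ?_⟩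
    simp only [hC2]
    rw [hc, hk_cast_succ]
    ring
  set g : ℤ → Fin 2 := fun m => z (m / 2) + 1 with hg
  set x := ruleSeq C2 g with hxdef
  have hxs : Spec x C2 := ruleSeq_spec g hC2spec
  have hxm : x ∈ substShift chi := mem_of_spec hxs
  have hDDCz : ∀ k, (3:ℤ)^k ∣ DD (CS x) k - Cz k := by
    intro k
    have h1 : (3:ℤ)^k ∣ CS x k - C2 k := spec_unique (spec_of_mem hxm) hxs k
    have h2 : (3:ℤ)^k ∣ DD (CS x) k - DD C2 k := DD_congr k h1
    have h3 : (3:ℤ)^k ∣ DD C2 k - Cz k := by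
      refine ⟨(hk k:ℤ)^2 + hk k - Cz k, ?_⟩
      simp only [DD, hC2]
      rw [← hk_cast_pow]
      ring
    have h0 : DD (CS x) k - Cz k = (DD (CS x) k - DD C2 k) + (DD C2 k - Cz k) := by ring
    rw [h0]
    exact dvd_add h2 h3
  refine ⟨x, hxm, funext fun m => ?_⟩
  apply spec_ext (spec_FF hxm) hzs hDDCz m
  intro hall
  have hallz : ∀ k, (m + Cz k) % (3:ℤ)^k = (hk k : ℤ) := fun k => by
    rw [← emod_congr k (hDDCz k) m]; exact hall k
  have hallx : ∀ k, ((2*m) + C2 k) % (3:ℤ)^k = (hk k:ℤ) := by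
    intro k
    have h1 : (3:ℤ)^k ∣ (m + Cz k) - (hk k:ℤ) := Int.dvd_self_sub_of_emod_eq (hallz k)
    obtain ⟨t, ht⟩ := h1
    have hm : m = (hk k:ℤ) + 3^k * t - Cz k := by omega
    have h0 : (2*m) + C2 k = (hk k:ℤ) + 3^k * (2*t - hk k) := by
      simp only [hC2]
      rw [hm, ← hk_cast_pow]
      ring
    have hhb : (0:ℤ) ≤ (hk k:ℤ) ∧ (hk k:ℤ) < 3^k := by
      constructor
      · positivity
      · have := hk_cast_pow k; omega
    rw [h0, Int.add_mul_emod_self_left, Int.emod_eq_of_lt hhb.1 hhb.2]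
  have hxg : x (2*m) = g (2*m) := ruleSeq_special _ hallx
  show x (2*m) + 1 = z m
  rw [hxg, hg]
  show z ((2*m)/2) + 1 + 1 = z m
  rw [Int.mul_ediv_cancel_left m (by norm_num : (2:ℤ) ≠ 0), fin2_flip_flip]


end Statement14Aux

/-- (X_χ, σ^1) is a topological factor of (X_χ, σ^2). -/
theorem statement14 :
    IsFactorOn (substShift chi) (shiftMap^[2]) (substShift chi) (shiftMap^[1]) := by
  refine ⟨FF, ?_, ?_, ?_, ?_⟩
  · intro x hx
    exact FF_mem hx
  · exact FF_continuous.continuousOn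
  · intro z hz
    obtain ⟨x, hxm, hfx⟩ := FF_surj hz
    exact ⟨x, hxm, hfx⟩
  · intro x _
    funext m
    have e1 : shiftMap^[2] x = shiftMap (shiftMap x) := by
      rw [Function.iterate_succ_apply', Function.iterate_one]
    have e2 : (shiftMap^[1] (FF x)) m = FF x (m + 1) := by
      rw [Function.iterate_one]
      rfl
    rw [e1, e2]
    exact FF_equivariant x m


end
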